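/- The coefficient of q^N in (1/(q;q)_∞)·h(q^m) equals the weighted count C_m(N) of m-strings over all partitions of N, where an m-string of a partition λ is a set of parts of λ of the form m(1+k), m(3+k), ..., m(2j-1+k) for some integers j ≥ 1 and 0 ≤ k ≤ j, with weight 1 if k = 0 or k = j, and weight 2 otherwise. -/

import Mathlib

open PowerSeries Finset

/-- `h(q) = ∑_{n≥1} (-1)^{n+1} q^{n(n+1)/2}/(1-q^n)`, with `1/(1-q^n)` the geometric
series; defined coefficientwise (only terms with `n(n+1)/2 ≤ N` contribute to `q^N`). -/
noncomputable def h : PowerSeries ℝ :=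
  PowerSeries.mk fun N => ∑ n ∈ Finset.Icc 1 N,
    if n * (n + 1) / 2 ≤ N ∧ n ∣ (N - n * (n + 1) / 2) then (-1 : ℝ) ^ (n + 1) else 0

/-- Substitution `q ↦ q^d`: the coefficient of `q^{dn}` in `substPow d f` is the
coefficient of `q^n` in `f`, all other coefficients vanish. -/
noncomputable def substPow (d : ℕ) (f : PowerSeries ℝ) : PowerSeries ℝ :=
  PowerSeries.mk fun N => if d ∣ N then PowerSeries.coeff (N / d) f else 0

/-- `(q;q)_∞ = ∏_{n≥1} (1-q^n)`, defined coefficientwise by the stable truncation. -/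
noncomputable def euler : PowerSeries ℝ :=
  PowerSeries.mk fun N =>
    PowerSeries.coeff N (∏ n ∈ Finset.Icc 1 N, (1 - PowerSeries.X ^ n))

/-- `∏_{n ≥ 1, d ∤ n} (1-q^n)`, defined coefficientwise by the stable truncation. -/
noncomputable def eulerNotDvd (d : ℕ) : PowerSeries ℝ :=
  PowerSeries.mk fun N => PowerSeries.coeff N
    (∏ n ∈ (Finset.Icc 1 N).filter (fun n => ¬ d ∣ n), (1 - PowerSeries.X ^ n))

/-- `M_p(q) = (1/(q;q)_∞)(h(q) - p h(q^p))`. -/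
noncomputable def Mser (p : ℕ) : PowerSeries ℝ :=
  euler⁻¹ * (h - (p : PowerSeries ℝ) * substPow p h)


/-- The weight of an `m`-string with parameters `(j,k)`. -/
def strWt (j k : ℕ) : ℕ := if k = 0 ∨ k = j then 1 else 2

/-- `C_m(N)`: the weighted count of `m`-strings `m(1+k), m(3+k), …, m(2j-1+k)`
(`j ≥ 1`, `0 ≤ k ≤ j`) over all partitions of `N`.  (Terms with `j > N` vanish since
then `m(2j-1+k) > N` cannot be a part.) -/
noncomputable def Cstr (m N : ℕ) : ℕ :=
  ∑ P : Nat.Partition N, ∑ j ∈ Finset.Icc 1 N, ∑ k ∈ Finset.range (j + 1),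
    if ∀ i ∈ Finset.Icc 1 j, m * (2 * i - 1 + k) ∈ P.parts then strWt j k else 0

namespace KKS
noncomputable section
variable {α : Type*}
open Finset
open scoped Classical

/-- A convenience constructor for the power series whose coefficients indicate a subset. -/
def indicatorSeries (α : Type*) [Semiring α] (s : Set ℕ) : PowerSeries α :=
  PowerSeries.mk fun n => if n ∈ s then 1 else 0

theorem coeff_indicator (s : Set ℕ) [Semiring α] (n : ℕ) :
    coeff (R := α) n (indicatorSeries α s) = if n ∈ s then 1 else 0 :=
  coeff_mk _ _

theorem coeff_indicator_pos (s : Set ℕ) [Semiring α] (n : ℕ) (h : n ∈ s) :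
    coeff (R := α) n (indicatorSeries α s) = 1 := by rw [coeff_indicator, if_pos h]

theorem coeff_indicator_neg (s : Set ℕ) [Semiring α] (n : ℕ) (h : n ∉ s) :
    coeff (R := α) n (indicatorSeries α s) = 0 := by rw [coeff_indicator, if_neg h]

theorem constantCoeff_indicator (s : Set ℕ) [Semiring α] :
    constantCoeff (R := α) (indicatorSeries α s) = if 0 ∈ s then 1 else 0 :=
  rfl

theorem two_series (i : ℕ) [Semiring α] :
    1 + (X : PowerSeries α) ^ i.succ = indicatorSeries α {0, i.succ} := by
  ext n
  simp only [coeff_indicator, coeff_one, coeff_X_pow, Set.mem_insert_iff, Set.mem_singleton_iff,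
    map_add]
  cases' n with d
  · simp [(Nat.succ_ne_zero i).symm]
  · simp [Nat.succ_ne_zero d]

theorem num_series' [Field α] (i : ℕ) :
    (1 - (X : PowerSeries α) ^ (i + 1))⁻¹ = indicatorSeries α {k | i + 1 ∣ k} := by
  rw [PowerSeries.inv_eq_iff_mul_eq_one]
  · ext n
    cases n with
    | zero => simp [mul_sub, zero_pow, constantCoeff_indicator]
    | succ n =>
      simp only [coeff_one, if_false, mul_sub, mul_one, coeff_indicator,
        LinearMap.map_sub, reduceCtorEq]
      simp_rw [coeff_mul, coeff_X_pow, coeff_indicator, @boole_mul _ _ _ _]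
      erw [@sum_ite _ _ _ _ _ (fun _ => Classical.propDecidable _), sum_ite]
      simp_rw [@filter_filter _ _ _ _ _, sum_const_zero, add_zero, sum_const, nsmul_eq_mul, mul_one,
        sub_eq_iff_eq_add, zero_add]
      symm
      split_ifs with h
      · suffices #{a ∈ antidiagonal (n + 1) | i + 1 ∣ a.fst ∧ a.snd = i + 1} = 1 by
          simp only [Set.mem_setOf_eq]; convert congr_arg ((↑) : ℕ → α) this; norm_cast
        rw [card_eq_one]
        cases' h with p hp
        refine ⟨((i + 1) * (p - 1), i + 1), ?_⟩
        ext ⟨a₁, a₂⟩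
        simp only [mem_filter, Prod.mk_inj, HasAntidiagonal.mem_antidiagonal, mem_singleton]
        constructor
        · rintro ⟨a_left, ⟨a, rfl⟩, rfl⟩
          refine ⟨?_, rfl⟩
          rw [Nat.mul_sub_left_distrib, ← hp, ← a_left, mul_one, Nat.add_sub_cancel]
        · rintro ⟨rfl, rfl⟩
          match p with
          | 0 => rw [mul_zero] at hp; cases hp
          | p + 1 => rw [hp]; simp [mul_add]
      · suffices #{a ∈ antidiagonal (n + 1) | i + 1 ∣ a.fst ∧ a.snd = i + 1} = 0 by
          simp only [Set.mem_setOf_eq]; convert congr_arg ((↑) : ℕ → α) this; norm_cast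
        rw [card_eq_zero]
        apply eq_empty_of_forall_notMem
        simp only [Prod.forall, mem_filter, not_and, HasAntidiagonal.mem_antidiagonal]
        rintro _ h₁ h₂ ⟨a, rfl⟩ rfl
        apply h
        simp [← h₂]
  · simp [zero_pow]

def mkOdd : ℕ ↪ ℕ :=
  ⟨fun i => 2 * i + 1, fun x y h => by linarith⟩

-- The main workhorse of the partition theorem proof.
theorem partialGF_prop (α : Type*) [CommSemiring α] (n : ℕ) (s : Finset ℕ) (hs : ∀ i ∈ s, 0 < i)
    (c : ℕ → Set ℕ) (hc : ∀ i, i ∉ s → 0 ∈ c i) :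
    #{p : n.Partition | (∀ j, p.parts.count j ∈ c j) ∧ ∀ j ∈ p.parts, j ∈ s} =
      coeff (R := α) n (∏ i ∈ s, indicatorSeries α ((· * i) '' c i)) := by
  simp_rw [coeff_prod, coeff_indicator, prod_boole, sum_boole]
  apply congr_arg
  simp only [mem_univ, forall_true_left, not_and, not_forall, exists_prop,
    Set.mem_image, not_exists]
  set φ : (a : Nat.Partition n) →
    a ∈ filter (fun p ↦ (∀ (j : ℕ), Multiset.count j p.parts ∈ c j) ∧ ∀ j ∈ p.parts, j ∈ s) univ →
    ℕ →₀ ℕ := fun p _ => {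
      toFun := fun i => Multiset.count i p.parts • i
      support := Finset.filter (fun i => i ≠ 0) p.parts.toFinset
      mem_support_toFun := fun a => by
        simp only [smul_eq_mul, ne_eq, mul_eq_zero, Multiset.count_eq_zero]
        rw [not_or, not_not]
        simp only [Multiset.mem_toFinset, not_not, mem_filter] }
  refine Finset.card_bij φ ?_ ?_ ?_
  · intro a ha
    simp only [φ, not_forall, not_exists, not_and, exists_prop, mem_filter]
    rw [mem_finsuppAntidiag]
    dsimp only [ne_eq, smul_eq_mul, id_eq, eq_mpr_eq_cast, le_eq_subset, Finsupp.coe_mk]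
    simp only [mem_univ, forall_true_left, not_and, not_forall, exists_prop,
      mem_filter, true_and] at ha
    refine ⟨⟨?_, fun i ↦ ?_⟩, fun i _ ↦ ⟨a.parts.count i, ha.1 i, rfl⟩⟩
    · conv_rhs => simp [← a.parts_sum]
      rw [sum_multiset_count_of_subset _ s]
      · simp only [smul_eq_mul]
      · intro i
        simp only [Multiset.mem_toFinset, not_not, mem_filter]
        apply ha.2
    · simp only [ne_eq, Multiset.mem_toFinset, not_not, mem_filter, and_imp]
      exact fun hi _ ↦ ha.2 i hi
  · intro p₁ hp₁ p₂ hp₂ h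
    apply Nat.Partition.ext
    simp only [true_and, mem_univ, mem_filter] at hp₁ hp₂
    ext i
    simp only [φ, ne_eq, Multiset.mem_toFinset, not_not, smul_eq_mul, Finsupp.mk.injEq] at h
    by_cases hi : i = 0
    · rw [hi]
      rw [Multiset.count_eq_zero_of_notMem]
      · rw [Multiset.count_eq_zero_of_notMem]
        intro a; exact Nat.lt_irrefl 0 (hs 0 (hp₂.2 0 a))
      intro a; exact Nat.lt_irrefl 0 (hs 0 (hp₁.2 0 a))
    · rw [← mul_left_inj' hi]
      rw [funext_iff] at h
      exact h.2 i
  · simp only [φ, mem_filter, mem_finsuppAntidiag, mem_univ, exists_prop, true_and, and_assoc]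
    rintro f ⟨hf, hf₃, hf₄⟩
    have hf' : f ∈ finsuppAntidiag s n := mem_finsuppAntidiag.mpr ⟨hf, hf₃⟩
    simp only [mem_finsuppAntidiag] at hf'
    refine ⟨⟨∑ i ∈ s, Multiset.replicate (f i / i) i, ?_, ?_⟩, ?_, ?_, ?_⟩
    · intro i hi
      simp only [exists_prop, Multiset.mem_sum, mem_map, Function.Embedding.coeFn_mk] at hi
      rcases hi with ⟨t, ht, z⟩
      apply hs
      rwa [Multiset.eq_of_mem_replicate z]
    · simp_rw [Multiset.sum_sum, Multiset.sum_replicate, Nat.nsmul_eq_mul]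
      rw [← hf'.1]
      refine sum_congr rfl fun i hi => Nat.div_mul_cancel ?_
      rcases hf₄ i hi with ⟨w, _, hw₂⟩
      rw [← hw₂]
      exact dvd_mul_left _ _
    · intro i
      simp_rw [Multiset.count_sum', Multiset.count_replicate, sum_ite_eq']
      split_ifs with h
      · rcases hf₄ i h with ⟨w, hw₁, hw₂⟩
        rwa [← hw₂, Nat.mul_div_cancel _ (hs i h)]
      · exact hc _ h
    · intro i hi
      rw [Multiset.mem_sum] at hi
      rcases hi with ⟨j, hj₁, hj₂⟩
      rwa [Multiset.eq_of_mem_replicate hj₂]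
    · ext i
      simp_rw [Multiset.count_sum', Multiset.count_replicate, sum_ite_eq']
      simp only [ne_eq, Multiset.mem_toFinset, not_not, smul_eq_mul, ite_mul,
        zero_mul, Finsupp.coe_mk]
      split_ifs with h
      · apply Nat.div_mul_cancel
        rcases hf₄ i h with ⟨w, _, hw₂⟩
        apply Dvd.intro_left _ hw₂
      · apply symm
        rw [← Finsupp.notMem_support_iff]
        exact notMem_mono hf'.2 h

end
end KKS

open KKS


-- stability of the truncated products
lemma coeff_prod_one_sub (s : Finset ℕ) (a : ℕ) (hs : ∀ n ∈ s, a < n) (i : ℕ) (hi : i ≤ a) :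
    PowerSeries.coeff (R := ℝ) i (∏ n ∈ s, (1 - PowerSeries.X ^ n)) = if i = 0 then 1 else 0 := by
  induction s using Finset.induction_on with
  | empty => simp [PowerSeries.coeff_one]
  | @insert n s hn ih =>
    rw [Finset.prod_insert hn, sub_mul, one_mul, map_sub]
    rw [ih (fun x hx => hs x (Finset.mem_insert_of_mem hx))]
    have hzero : PowerSeries.coeff (R := ℝ) i (PowerSeries.X ^ n * ∏ x ∈ s, (1 - PowerSeries.X ^ x)) = 0 := by
      rw [PowerSeries.coeff_mul]
      apply Finset.sum_eq_zero
      rintro ⟨x, y⟩ hxy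
      rw [Finset.HasAntidiagonal.mem_antidiagonal] at hxy
      have hxn : x < n := by
        have := hs n (Finset.mem_insert_self n s)
        omega
      rw [PowerSeries.coeff_X_pow, if_neg (by omega), zero_mul]
    rw [hzero, sub_zero]

lemma coeff_euler_stable (N a : ℕ) (ha : a ≤ N) :
    PowerSeries.coeff (R := ℝ) a euler
      = PowerSeries.coeff (R := ℝ) a (∏ n ∈ Finset.Icc 1 N, (1 - PowerSeries.X ^ n)) := by
  rw [euler, PowerSeries.coeff_mk]
  have hsplit : Finset.Icc 1 N = Finset.Icc 1 a ∪ Finset.Ioc a N := by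
    ext x
    simp only [Finset.mem_Icc, Finset.mem_union, Finset.mem_Ioc]
    omega
  rw [hsplit, Finset.prod_union (by
    rw [Finset.disjoint_left]
    intro x hx hx'
    simp only [Finset.mem_Icc, Finset.mem_Ioc] at hx hx'
    omega)]
  rw [PowerSeries.coeff_mul]
  rw [Finset.sum_eq_single (a, 0)]
  · rw [coeff_prod_one_sub (Finset.Ioc a N) a
      (fun n hn => (Finset.mem_Ioc.mp hn).1) 0 (by omega)]
    simp
  · rintro ⟨x, y⟩ hxy hne
    rw [Finset.HasAntidiagonal.mem_antidiagonal] at hxy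
    have hy : y ≠ 0 := by
      intro h
      apply hne
      have hxa : x = a := by omega
      rw [h, hxa]
    rw [coeff_prod_one_sub (Finset.Ioc a N) a
      (fun n hn => (Finset.mem_Ioc.mp hn).1) y (by omega), if_neg hy, mul_zero]
  · intro h
    exact absurd (Finset.HasAntidiagonal.mem_antidiagonal.mpr (by omega)) h

lemma constCoeff_prod_one_sub (s : Finset ℕ) (hs : ∀ n ∈ s, 0 < n) :
    PowerSeries.constantCoeff (R := ℝ) (∏ n ∈ s, (1 - PowerSeries.X ^ n)) = 1 := by
  have := coeff_prod_one_sub s 0 hs 0 (le_refl 0)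
  rw [if_pos rfl] at this
  rw [← PowerSeries.coeff_zero_eq_constantCoeff_apply]
  exact this

lemma constCoeff_euler : PowerSeries.constantCoeff (R := ℝ) euler = 1 := by
  rw [← PowerSeries.coeff_zero_eq_constantCoeff_apply,
    coeff_euler_stable 0 0 (le_refl 0),
    PowerSeries.coeff_zero_eq_constantCoeff_apply]
  exact constCoeff_prod_one_sub _ (fun n hn => (Finset.mem_Icc.mp hn).1)

-- inverse coefficients agree if the series agree far enough
lemma coeff_inv_congr (f g : PowerSeries ℝ) (N : ℕ)
    (hf : PowerSeries.constantCoeff (R := ℝ) f = 1)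
    (hfg : ∀ i ≤ N, PowerSeries.coeff (R := ℝ) i f = PowerSeries.coeff (R := ℝ) i g) :
    ∀ i ≤ N, PowerSeries.coeff (R := ℝ) i f⁻¹ = PowerSeries.coeff (R := ℝ) i g⁻¹ := by
  have hg : PowerSeries.constantCoeff (R := ℝ) g = 1 := by
    rw [← PowerSeries.coeff_zero_eq_constantCoeff_apply] at hf ⊢
    rw [← hfg 0 (by omega)]
    exact hf
  intro i
  induction i using Nat.strong_induction_on with
  | _ i ih =>
    intro hiN
    rw [PowerSeries.coeff_inv, PowerSeries.coeff_inv, hf, hg]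
    rcases Nat.eq_zero_or_pos i with rfl | hi
    · simp
    · rw [if_neg (by omega), if_neg (by omega)]
      congr 1
      apply Finset.sum_congr rfl
      rintro ⟨x, y⟩ hxy
      rw [Finset.HasAntidiagonal.mem_antidiagonal] at hxy
      by_cases hy : y < i
      · rw [if_pos hy, if_pos hy, hfg x (by omega), ih y hy (by omega)]
      · rw [if_neg hy, if_neg hy]

lemma prod_inv_eq (s : Finset ℕ) (f : ℕ → PowerSeries ℝ)
    (hf : ∀ n ∈ s, PowerSeries.constantCoeff (R := ℝ) (f n) ≠ 0) :
    (∏ n ∈ s, f n)⁻¹ = ∏ n ∈ s, (f n)⁻¹ := by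
  rw [PowerSeries.inv_eq_iff_mul_eq_one]
  · rw [← Finset.prod_mul_distrib]
    rw [Finset.prod_congr rfl (fun n hn => PowerSeries.inv_mul_cancel (f n) (hf n hn))]
    exact Finset.prod_const_one
  · rw [map_prod]
    exact Finset.prod_ne_zero_iff.mpr hf

lemma coeff_inv_euler (N a : ℕ) (ha : a ≤ N) :
    PowerSeries.coeff (R := ℝ) a euler⁻¹ = Fintype.card (Nat.Partition a) := by
  classical
  -- step 1: replace euler⁻¹ by the inverse of the truncated product
  have h1 : PowerSeries.coeff (R := ℝ) a euler⁻¹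
      = PowerSeries.coeff (R := ℝ) a (∏ n ∈ Finset.Icc 1 N, (1 - PowerSeries.X ^ n))⁻¹ :=
    coeff_inv_congr euler _ N constCoeff_euler
      (fun i hi => coeff_euler_stable N i hi) a ha
  rw [h1, prod_inv_eq _ _ (fun n hn => by
    have h0 : (0:ℕ) < n := (Finset.mem_Icc.mp hn).1
    rw [map_sub, map_one, map_pow, PowerSeries.constantCoeff_X, zero_pow (by omega)]
    norm_num)]
  -- step 2: rewrite as indicator series over range
  have hIcc : Finset.Icc 1 N = (Finset.range N).map ⟨Nat.succ, Nat.succ_injective⟩ := by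
    ext x
    simp only [Finset.mem_Icc, Finset.mem_map, Finset.mem_range, Function.Embedding.coeFn_mk]
    constructor
    · rintro ⟨h1', h2'⟩; exact ⟨x - 1, by omega, by omega⟩
    · rintro ⟨y, hy, rfl⟩; omega
  rw [hIcc, Finset.prod_map]
  have hconv : ∀ i : ℕ, (1 - PowerSeries.X ^ (Nat.succ i) : PowerSeries ℝ)⁻¹
      = indicatorSeries ℝ ((· * Nat.succ i) '' Set.univ) := by
    intro i
    rw [num_series' i]
    have hseteq : {k : ℕ | i + 1 ∣ k} = ((· * Nat.succ i) '' Set.univ) := by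
      ext k
      simp only [Set.mem_setOf_eq, Set.mem_image, Set.mem_univ, true_and, Nat.succ_eq_add_one]
      constructor
      · rintro ⟨c, rfl⟩; exact ⟨c, mul_comm _ _⟩
      · rintro ⟨c, rfl⟩; exact ⟨c, mul_comm _ _⟩
    rw [hseteq]
  have hPG := partialGF_prop ℝ a ((Finset.range N).map ⟨Nat.succ, Nat.succ_injective⟩)
    (by
      intro i hi
      simp only [Finset.mem_map, Finset.mem_range, Function.Embedding.coeFn_mk] at hi
      obtain ⟨x, _, rfl⟩ := hi
      exact Nat.succ_pos x)
    (fun _ => Set.univ) (fun _ _ => trivial)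
  rw [Finset.prod_map] at hPG
  simp only [Function.Embedding.coeFn_mk] at hPG ⊢
  rw [Finset.prod_congr rfl (fun i _ => hconv i), ← hPG]
  have hset : Finset.filter
      (fun p : Nat.Partition a => (∀ j : ℕ, (p.parts.count j) ∈ Set.univ) ∧
        ∀ j ∈ p.parts, j ∈ (Finset.range N).map ⟨Nat.succ, Nat.succ_injective⟩)
      Finset.univ = Finset.univ := by
    apply Finset.filter_true_of_mem
    intro P _
    refine ⟨fun j => Set.mem_univ _, ?_⟩
    intro j hj
    have hjpos : 0 < j := P.parts_pos hj
    have hjle : j ≤ a := by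
      have := Multiset.single_le_sum (fun x _ => Nat.zero_le x) j hj
      rw [P.parts_sum] at this
      exact this
    simp only [Finset.mem_map, Finset.mem_range, Function.Embedding.coeFn_mk]
    exact ⟨j - 1, by omega, by omega⟩
  rw [hset]
  simp [Finset.card_univ]

set_option maxHeartbeats 1000000





lemma strWt_split {j k : ℕ} (hj : 1 ≤ j) (hk : k ≤ j) :
    strWt j k = (if k < j then 1 else 0) + (if 0 < k then 1 else 0) := by
  unfold strWt; split_ifs <;> omega

lemma double_count (M : ℕ) (P : ℕ → ℕ → Prop) [∀ j k, Decidable (P j k)] :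
    (∑ j ∈ Icc 1 M, ∑ k ∈ range (j+1), if P j k then 1 else 0)
      = ((Icc 1 M).sigma (fun j => (range (j+1)).filter (P j))).card := by
  rw [Finset.card_sigma]
  exact Finset.sum_congr rfl fun j _ => (Finset.card_filter _ _).symm

lemma rhs_eq_card (M : ℕ) (hM : 1 ≤ M) :
    (∑ j ∈ Icc 1 M, ∑ k ∈ range (j+1), if j*(j+k) = M then strWt j k else 0)
      = (M.divisors.filter (fun a => M < 2*(a*a) ∧ a*a ≤ 2*M)).card := by
  have hsplit : (∑ j ∈ Icc 1 M, ∑ k ∈ range (j+1), if j*(j+k) = M then strWt j k else 0)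
      = (∑ j ∈ Icc 1 M, ∑ k ∈ range (j+1), if j*(j+k) = M ∧ k < j then 1 else 0)
        + (∑ j ∈ Icc 1 M, ∑ k ∈ range (j+1), if j*(j+k) = M ∧ 0 < k then 1 else 0) := by
    rw [← Finset.sum_add_distrib]
    refine Finset.sum_congr rfl fun j hj => ?_
    rw [← Finset.sum_add_distrib]
    refine Finset.sum_congr rfl fun k hk => ?_
    simp only [mem_Icc] at hj
    simp only [mem_range] at hk
    by_cases h : j*(j+k) = M
    · simp only [h, if_true, true_and]
      rw [strWt_split hj.1 (by omega)]
    · simp [h]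
  rw [hsplit, double_count, double_count]
  have hA : ((Icc 1 M).sigma (fun j => (range (j+1)).filter (fun k => j*(j+k) = M ∧ k < j))).card
      = (M.divisors.filter (fun a => a*a ≤ M ∧ M < 2*(a*a))).card := by
    refine Finset.card_nbij' (fun x => x.1) (fun a => ⟨a, M/a - a⟩) ?_ ?_ ?_ ?_
    · rintro ⟨j, k⟩ hx
      simp only [Finset.mem_coe, Finset.mem_sigma, mem_Icc, mem_range, mem_filter] at hx
      obtain ⟨⟨hj1, hj2⟩, hk1, hjk, hklt⟩ := hx
      simp only [Finset.mem_coe, mem_filter, Nat.mem_divisors]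
      exact ⟨⟨⟨j+k, hjk.symm⟩, by omega⟩, by nlinarith, by nlinarith⟩
    · intro a ha
      simp only [Finset.mem_coe, mem_filter, Nat.mem_divisors] at ha
      obtain ⟨⟨⟨b, hb⟩, hM0⟩, h1, h2⟩ := ha
      have ha0 : 0 < a := by nlinarith
      have hbval : M / a = b := by rw [hb]; exact Nat.mul_div_cancel_left b ha0
      simp only [Finset.mem_coe, Finset.mem_sigma, mem_Icc, mem_range, mem_filter, hbval]
      have hab : a ≤ b := by nlinarith
      have hb2a : b < 2*a := by nlinarith
      have heq : a + (b - a) = b := by omega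
      refine ⟨⟨by omega, by nlinarith⟩, by omega, by rw [heq, hb], by omega⟩
    · rintro ⟨j, k⟩ hx
      simp only [Finset.mem_coe, Finset.mem_sigma, mem_Icc, mem_range, mem_filter] at hx
      obtain ⟨⟨hj1, hj2⟩, hk1, hjk, hklt⟩ := hx
      have h1 : M / j = j + k := by rw [← hjk]; exact Nat.mul_div_cancel_left _ (by omega)
      have h2 : (j + k) - j = k := by omega
      simp [h1, h2]
    · intro a ha; rfl
  have hB : ((Icc 1 M).sigma (fun j => (range (j+1)).filter (fun k => j*(j+k) = M ∧ 0 < k))).card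
      = (M.divisors.filter (fun a => M < a*a ∧ a*a ≤ 2*M)).card := by
    refine Finset.card_nbij' (fun x => x.1 + x.2) (fun a => ⟨M/a, a - M/a⟩) ?_ ?_ ?_ ?_
    · rintro ⟨j, k⟩ hx
      simp only [Finset.mem_coe, Finset.mem_sigma, mem_Icc, mem_range, mem_filter] at hx
      obtain ⟨⟨hj1, hj2⟩, hk1, hjk, hk0⟩ := hx
      simp only [Finset.mem_coe, mem_filter, Nat.mem_divisors]
      exact ⟨⟨⟨j, by rw [← hjk]; ring⟩, by omega⟩, by nlinarith, by nlinarith⟩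
    · intro a ha
      simp only [Finset.mem_coe, mem_filter, Nat.mem_divisors] at ha
      obtain ⟨⟨⟨b, hb⟩, hM0⟩, h1, h2⟩ := ha
      have ha0 : 0 < a := by nlinarith
      have hbval : M / a = b := by rw [hb]; exact Nat.mul_div_cancel_left b ha0
      simp only [Finset.mem_coe, Finset.mem_sigma, mem_Icc, mem_range, mem_filter, hbval]
      have hab : b < a := by nlinarith
      have hb2a : a ≤ 2*b := by nlinarith
      have hb0 : 0 < b := by nlinarith
      have heq : b + (a - b) = a := by omega
      refine ⟨⟨by omega, by nlinarith⟩, by omega, by rw [heq, hb, Nat.mul_comm], by omega⟩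
    · rintro ⟨j, k⟩ hx
      simp only [Finset.mem_coe, Finset.mem_sigma, mem_Icc, mem_range, mem_filter] at hx
      obtain ⟨⟨hj1, hj2⟩, hk1, hjk, hk0⟩ := hx
      have h1 : M / (j+k) = j := by
        rw [← hjk, Nat.mul_comm]; exact Nat.mul_div_cancel_left _ (by omega)
      have h2 : (j + k) - j = k := by omega
      simp [h1, h2]
    · intro a ha
      simp only [Finset.mem_coe, mem_filter, Nat.mem_divisors] at ha
      obtain ⟨⟨⟨b, hb⟩, hM0⟩, h1, h2⟩ := ha
      have ha0 : 0 < a := by nlinarith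
      have hbval : M / a = b := by rw [hb]; exact Nat.mul_div_cancel_left b ha0
      have hab : b < a := by nlinarith
      simp only [hbval]
      omega
  rw [hA, hB]
  rw [← Finset.card_union_of_disjoint (by
    rw [Finset.disjoint_filter]
    intro a _ h1 h2
    omega)]
  congr 1
  rw [← Finset.filter_or]
  apply Finset.filter_congr
  intro a _
  constructor
  · rintro (⟨h1, h2⟩ | ⟨h1, h2⟩) <;> constructor <;> omega
  · rintro ⟨h1, h2⟩
    by_cases h : a*a ≤ M
    · exact Or.inl ⟨h, h1⟩
    · exact Or.inr ⟨by omega, h2⟩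

lemma odd_dvd_helper {e M α m₀ : ℕ} (hM : M = 2^α * m₀) (he2M : e ∣ 2*M) (hodd : ¬ 2 ∣ e) :
    e ∣ m₀ := by
  have hcop : Nat.Coprime e (2^(α+1)) :=
    Nat.Coprime.pow_right _ (Nat.coprime_comm.mp ((Nat.Prime.coprime_iff_not_dvd Nat.prime_two).mpr hodd))
  refine Nat.Coprime.dvd_of_dvd_mul_left hcop ?_
  have h2 : 2^(α+1) * m₀ = 2*M := by rw [hM]; ring
  rwa [h2]

lemma hsum_eq (M α m₀ : ℕ) (hM : 1 ≤ M) (hm : M = 2^α * m₀) (hodd : ¬ 2 ∣ m₀) :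
    (∑ n ∈ Icc 1 M, if n*(n+1)/2 ≤ M ∧ n ∣ (M - n*(n+1)/2) then (-1:ℝ)^(n+1) else 0)
      = ∑ e ∈ m₀.divisors, (if e*e < 2*M then (1:ℝ) else -1) := by
  have hm₀ : m₀ ≠ 0 := by rintro rfl; simp [mul_zero] at hm; omega
  rw [← Finset.sum_filter]
  refine Finset.sum_nbij' (fun n => if 2 ∣ n then 2*M/n else n) (fun e => min e (2*M/e))
    ?_ ?_ ?_ ?_ ?_
  · -- forward membership
    intro n hn
    simp only [mem_filter, mem_Icc] at hn
    obtain ⟨⟨hn1, hn2⟩, hT, hdvd⟩ := hn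
    obtain ⟨t, ht⟩ := hdvd
    have h2T : 2*(n*(n+1)/2) = n*(n+1) := by
      rw [Nat.mul_div_cancel' (even_iff_two_dvd.mp (Nat.even_mul_succ_self n))]
    have hns : n * (n+1+2*t) = 2*M := by
      have hexp : n*(n+1+2*t) = n*(n+1) + 2*(n*t) := by ring
      omega
    have hsdiv : 2*M/n = n+1+2*t := by rw [← hns]; exact Nat.mul_div_cancel_left _ (by omega)
    simp only [Nat.mem_divisors]
    by_cases h2 : 2 ∣ n
    · rw [if_pos h2, hsdiv]
      refine ⟨odd_dvd_helper hm ⟨n, by rw [← hns]; ring⟩ (by omega), hm₀⟩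
    · rw [if_neg h2]
      exact ⟨odd_dvd_helper hm ⟨n+1+2*t, hns.symm⟩ h2, hm₀⟩
  · -- backward membership
    intro e he
    simp only [Nat.mem_divisors] at he
    obtain ⟨hedvd, _⟩ := he
    have he0 : 0 < e := Nat.pos_of_dvd_of_pos hedvd (by omega)
    have heodd : ¬ 2 ∣ e := fun h => hodd (h.trans hedvd)
    have heM : e ∣ 2*M := Dvd.dvd.mul_left (hedvd.trans ⟨2^α, by rw [hm, mul_comm]⟩) 2
    set f := 2*M/e with hf
    have hef : e * f = 2*M := Nat.mul_div_cancel' heM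
    have hfeven : 2 ∣ f := by
      rcases (Nat.Prime.dvd_mul Nat.prime_two).mp (⟨M, hef⟩ : 2 ∣ e*f) with h | h
      · exact absurd h heodd
      · exact h
    have hne : e ≠ f := by intro hcontr; rw [hcontr] at heodd; exact heodd hfeven
    have hf0 : 0 < f := Nat.div_pos (Nat.le_of_dvd (by omega) heM) he0
    set n := min e f with hn
    set s := max e f with hs
    have hns : n * s = 2*M := by
      rcases le_total e f with h | h
      · rw [hn, hs, min_eq_left h, max_eq_right h]; exact hef
      · rw [hn, hs, min_eq_right h, max_eq_left h, mul_comm]; exact hef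
    have hnlts : n < s := by
      rcases lt_or_gt_of_ne hne with h | h
      · rw [hn, hs, min_eq_left h.le, max_eq_right h.le]; exact h
      · rw [hn, hs, min_eq_right h.le, max_eq_left h.le]; exact h
    have hn0 : 0 < n := by rw [hn]; exact lt_min he0 hf0
    have hpar : ¬ 2 ∣ n ∧ 2 ∣ s ∨ 2 ∣ n ∧ ¬ 2 ∣ s := by
      rcases le_total e f with h | h
      · rw [hn, hs, min_eq_left h, max_eq_right h]; exact Or.inl ⟨heodd, hfeven⟩
      · rw [hn, hs, min_eq_right h, max_eq_left h]; exact Or.inr ⟨hfeven, heodd⟩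
    -- s = n + 1 + 2u
    obtain ⟨u, hu⟩ : ∃ u, s = n + 1 + 2*u := by
      rcases hpar with ⟨h1, h2⟩ | ⟨h1, h2⟩ <;> exact ⟨(s - n - 1)/2, by omega⟩
    have hT2 : 2*(n*(n+1)/2) = n*(n+1) := by
      rw [Nat.mul_div_cancel' (even_iff_two_dvd.mp (Nat.even_mul_succ_self n))]
    have hexp : n*s = n*(n+1) + 2*(n*u) := by rw [hu]; ring
    have hnn : n*(n+1) ≤ 2*M := by
      calc n*(n+1) ≤ n*s := Nat.mul_le_mul_left n (by omega)
      _ = 2*M := hns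
    have hTM : n*(n+1)/2 ≤ M := by omega
    have hMT : M - n*(n+1)/2 = n*u := by omega
    have hnM : n ≤ M := by nlinarith [hns, hnlts, hn0]
    simp only [mem_filter, mem_Icc]
    exact ⟨⟨hn0, hnM⟩, hTM, ⟨u, hMT⟩⟩
  · -- left inverse
    intro n hn
    simp only [mem_filter, mem_Icc] at hn
    obtain ⟨⟨hn1, hn2⟩, hT, hdvd⟩ := hn
    obtain ⟨t, ht⟩ := hdvd
    have h2T : 2*(n*(n+1)/2) = n*(n+1) := by
      rw [Nat.mul_div_cancel' (even_iff_two_dvd.mp (Nat.even_mul_succ_self n))]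
    have hns : n * (n+1+2*t) = 2*M := by
      have hexp : n*(n+1+2*t) = n*(n+1) + 2*(n*t) := by ring
      omega
    have hsdiv : 2*M/n = n+1+2*t := by rw [← hns]; exact Nat.mul_div_cancel_left _ (by omega)
    by_cases h2 : 2 ∣ n
    · rw [if_pos h2, hsdiv]
      have : 2*M/(n+1+2*t) = n := by
        rw [← hns, mul_comm]; exact Nat.mul_div_cancel_left _ (by omega)
      rw [this]
      exact min_eq_right (by omega)
    · rw [if_neg h2, hsdiv]
      exact min_eq_left (by omega)
  · -- right inverse
    intro e he
    simp only [Nat.mem_divisors] at he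
    obtain ⟨hedvd, _⟩ := he
    have he0 : 0 < e := Nat.pos_of_dvd_of_pos hedvd (by omega)
    have heodd : ¬ 2 ∣ e := fun h => hodd (h.trans hedvd)
    have heM : e ∣ 2*M := Dvd.dvd.mul_left (hedvd.trans ⟨2^α, by rw [hm, mul_comm]⟩) 2
    set f := 2*M/e with hf
    have hef : e * f = 2*M := Nat.mul_div_cancel' heM
    have hfeven : 2 ∣ f := by
      rcases (Nat.Prime.dvd_mul Nat.prime_two).mp (⟨M, hef⟩ : 2 ∣ e*f) with h | h
      · exact absurd h heodd
      · exact h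
    have hne : e ≠ f := by intro hcontr; rw [hcontr] at heodd; exact heodd hfeven
    have hf0 : 0 < f := Nat.div_pos (Nat.le_of_dvd (by omega) heM) he0
    rcases lt_or_gt_of_ne hne with h | h
    · rw [min_eq_left h.le, if_neg heodd]
    · rw [min_eq_right h.le, if_pos hfeven]
      rw [show 2*M/f = e from by rw [← hef, mul_comm]; exact Nat.mul_div_cancel_left _ hf0]
  · -- values
    intro n hn
    simp only [mem_filter, mem_Icc] at hn
    obtain ⟨⟨hn1, hn2⟩, hT, hdvd⟩ := hn
    obtain ⟨t, ht⟩ := hdvd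
    have h2T : 2*(n*(n+1)/2) = n*(n+1) := by
      rw [Nat.mul_div_cancel' (even_iff_two_dvd.mp (Nat.even_mul_succ_self n))]
    have hns : n * (n+1+2*t) = 2*M := by
      have hexp : n*(n+1+2*t) = n*(n+1) + 2*(n*t) := by ring
      omega
    have hsdiv : 2*M/n = n+1+2*t := by rw [← hns]; exact Nat.mul_div_cancel_left _ (by omega)
    by_cases h2 : 2 ∣ n
    · rw [if_pos h2, hsdiv]
      have hbig : ¬ ((n+1+2*t)*(n+1+2*t) < 2*M) := by
        rw [← hns]
        push_neg
        exact Nat.mul_le_mul_right _ (by omega)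
      rw [if_neg hbig]
      have : Odd (n+1) := ⟨n/2, by omega⟩
      rw [Odd.neg_one_pow this]
    · rw [if_neg h2]
      have hsmall : n*n < 2*M := by
        nlinarith [hns]
      rw [if_pos hsmall]
      have : Even (n+1) := ⟨(n+1)/2, by omega⟩
      rw [Even.neg_one_pow this]

lemma flip_card (m₀ c : ℕ) (hpos : 0 < m₀) (hodd : ¬ 2 ∣ m₀) (hc : 2 ∣ c) :
    ((m₀.divisors).filter (fun e => c*m₀ < e*e)).card
      = ((m₀.divisors).filter (fun e => c*(e*e) ≤ m₀)).card := by
  refine Finset.card_nbij' (fun e => m₀/e) (fun e => m₀/e) ?_ ?_ ?_ ?_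
  · intro e he
    simp only [Finset.mem_coe, mem_filter, Nat.mem_divisors] at he ⊢
    obtain ⟨⟨hdvd, h0⟩, hlt⟩ := he
    have he0 : 0 < e := Nat.pos_of_dvd_of_pos hdvd hpos
    set e' := m₀/e with he'
    have hee' : e * e' = m₀ := Nat.mul_div_cancel' hdvd
    have he'0 : 0 < e' := Nat.div_pos (Nat.le_of_dvd hpos hdvd) he0
    have hlt2 : c*e' < e := by
      have : (c*e')*e < e*e := by calc (c*e')*e = c*(e*e') := by ring
                                     _ = c*m₀ := by rw [hee']
                                     _ < e*e := hlt
      exact Nat.lt_of_mul_lt_mul_right this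
    refine ⟨⟨⟨e, by rw [← hee']; ring⟩, h0⟩, ?_⟩
    calc c*(e'*e') = (c*e')*e' := by ring
      _ ≤ e*e' := Nat.mul_le_mul_right _ hlt2.le
      _ = m₀ := hee'
  · intro e he
    simp only [Finset.mem_coe, mem_filter, Nat.mem_divisors] at he ⊢
    obtain ⟨⟨hdvd, h0⟩, hle⟩ := he
    have he0 : 0 < e := Nat.pos_of_dvd_of_pos hdvd hpos
    set e' := m₀/e with he'
    have hee' : e * e' = m₀ := Nat.mul_div_cancel' hdvd
    have he'0 : 0 < e' := Nat.div_pos (Nat.le_of_dvd hpos hdvd) he0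
    have he'odd : ¬ 2 ∣ e' := fun h => hodd (h.trans ⟨e, by rw [← hee']; ring⟩)
    have hle2 : c*e ≤ e' := by
      have : (c*e)*e ≤ e'*e := by calc (c*e)*e = c*(e*e) := by ring
                                    _ ≤ m₀ := hle
                                    _ = e'*e := by rw [← hee']; ring
      exact Nat.le_of_mul_le_mul_right this he0
    have hlt2 : c*e < e' := by
      rcases Nat.lt_or_ge (c*e) e' with h | h
      · exact h
      · exfalso
        have : c*e = e' := le_antisymm hle2 h
        apply he'odd
        rw [← this]
        exact Dvd.dvd.mul_right hc e
    refine ⟨⟨⟨e, by rw [← hee']; ring⟩, h0⟩, ?_⟩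
    calc c*m₀ = (c*e)*e' := by rw [← hee']; ring
      _ < e'*e' := by nlinarith
  · intro e he
    simp only [Finset.mem_coe, mem_filter, Nat.mem_divisors] at he
    exact Nat.div_div_self he.1.1 he.1.2
  · intro e he
    simp only [Finset.mem_coe, mem_filter, Nat.mem_divisors] at he
    exact Nat.div_div_self he.1.1 he.1.2

lemma pow4 (γ e : ℕ) : (2^γ*e)*(2^γ*e) = 4^γ*(e*e) := by
  rw [show (4:ℕ) = 2*2 from rfl, mul_pow]; ring

noncomputable def gam (M e : ℕ) : ℕ :=
  Nat.find (⟨M, by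
    rcases Nat.eq_zero_or_pos e with h | h
    · exact Or.inr h
    · refine Or.inl ?_
      have h1 : M < 4^M := Nat.lt_pow_self (n := M) (by norm_num)
      have h2 : 4^M ≤ 4^M*(e*e) := Nat.le_mul_of_pos_right _ (by positivity)
      have h3 : 2*4^M*(e*e) = 2*(4^M*(e*e)) := by ring
      omega⟩ : ∃ γ, M < 2*4^γ*(e*e) ∨ e = 0)

lemma gam_spec (M e : ℕ) (he : 0 < e) : M < 2*4^(gam M e)*(e*e) := by
  rcases Nat.find_spec (p := fun γ => M < 2*4^γ*(e*e) ∨ e = 0) _ with h | h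
  · exact h
  · omega

lemma gam_min (M e : ℕ) (he : 0 < e) {γ : ℕ} (h : γ < gam M e) : ¬ (M < 2*4^γ*(e*e)) := by
  intro hcon
  exact Nat.find_min _ h (Or.inl hcon)

lemma gam_eq (M e : ℕ) (he : 0 < e) {δ : ℕ} (hspec : M < 2*4^δ*(e*e))
    (hmin : δ = 0 ∨ 2*4^(δ-1)*(e*e) ≤ M) : gam M e = δ := by
  rcases Nat.lt_trichotomy (gam M e) δ with h | h | h
  · exfalso
    rcases hmin with h0 | hle
    · omega
    · have hs := gam_spec M e he
      have h4 : 2*4^(gam M e)*(e*e) ≤ 2*4^(δ-1)*(e*e) := by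
        have : (4:ℕ)^(gam M e) ≤ 4^(δ-1) := Nat.pow_le_pow_right (by norm_num) (by omega)
        calc 2*4^(gam M e)*(e*e) = 2*(4^(gam M e)*(e*e)) := by ring
        _ ≤ 2*(4^(δ-1)*(e*e)) := by
            have := Nat.mul_le_mul_right (e*e) this
            omega
        _ = 2*4^(δ-1)*(e*e) := by ring
      omega
  · exact h
  · exact absurd hspec (gam_min M e he h)

lemma cardS_eq (α m₀ : ℕ) (hodd : ¬ 2 ∣ m₀) (hpos : 0 < m₀) :
    ((2^α*m₀).divisors.filter (fun a => 2^α*m₀ < 2*(a*a) ∧ a*a ≤ 2*(2^α*m₀))).card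
      = (m₀.divisors.filter (fun e => e*e < 2*(2^α*m₀) ∧ m₀ < 2^(α+1)*(e*e))).card := by
  set M := 2^α*m₀ with hMdef
  have hM : 0 < M := by positivity
  refine Finset.card_nbij' (fun a => a / 2^(a.factorization 2))
    (fun e => 2^(gam M e) * e) ?_ ?_ ?_ ?_
  · -- forward membership
    intro a ha
    simp only [Finset.mem_coe, mem_filter, Nat.mem_divisors] at ha ⊢
    obtain ⟨⟨hadvd, _⟩, h1, h2⟩ := ha
    have ha0 : 0 < a := Nat.pos_of_dvd_of_pos hadvd hM
    set β := a.factorization 2 with hβ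
    set e := a / 2^β with he
    have hae : 2^β * e = a := Nat.ordProj_mul_ordCompl_eq_self a 2
    have heodd : ¬ 2 ∣ e := Nat.not_dvd_ordCompl Nat.prime_two (by omega)
    have he0 : 0 < e := Nat.ordCompl_pos 2 (by omega)
    have hedvd : e ∣ m₀ := by
      refine Nat.Coprime.dvd_of_dvd_mul_left
        (Nat.Coprime.pow_right α
          (Nat.coprime_comm.mp ((Nat.Prime.coprime_iff_not_dvd Nat.prime_two).mpr heodd))) ?_
      exact dvd_trans (Nat.ordCompl_dvd a 2) hadvd
    have hβα : β ≤ α := by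
      have h2β : (2:ℕ)^β ∣ 2^α * m₀ := dvd_trans (Nat.ordProj_dvd a 2) hadvd
      have : (2:ℕ)^β ∣ 2^α := by
        refine Nat.Coprime.dvd_of_dvd_mul_right ?_ h2β
        exact Nat.Coprime.pow_left _ ((Nat.Prime.coprime_iff_not_dvd Nat.prime_two).mpr hodd)
      exact (Nat.pow_dvd_pow_iff_le_right (by norm_num)).mp this
    have hea : e ≤ a := Nat.le_of_dvd ha0 (Nat.ordCompl_dvd a 2)
    refine ⟨⟨hedvd, by omega⟩, ?_, ?_⟩
    · -- e*e < 2*M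
      have hle : e*e ≤ 2*M := le_trans (Nat.mul_le_mul hea hea) h2
      rcases Nat.lt_or_ge (e*e) (2*M) with h | h
      · exact h
      · exfalso
        have heq : e*e = 2*M := by omega
        rcases (Nat.Prime.dvd_mul Nat.prime_two).mp (⟨M, heq⟩ : 2 ∣ e*e) with h' | h' <;>
          exact heodd h'
    · -- m₀ < 2^(α+1)*(e*e)
      have haa : a*a = 4^β*(e*e) := by rw [← hae, pow4]
      have h4 : (4:ℕ)^β ≤ 4^α := Nat.pow_le_pow_right (by norm_num) hβα
      have hlt : 2^α*m₀ < 2^α*(2^(α+1)*(e*e)) := by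
        have h4α : 2*(4^α*(e*e)) = 2^α*(2^(α+1)*(e*e)) := by
          rw [show (4:ℕ) = 2*2 from rfl, mul_pow, pow_succ]; ring
        have hmul := Nat.mul_le_mul_right (e*e) h4
        calc 2^α*m₀ = M := rfl
        _ < 2*(a*a) := h1
        _ = 2*(4^β*(e*e)) := by rw [haa]
        _ ≤ 2*(4^α*(e*e)) := by omega
        _ = 2^α*(2^(α+1)*(e*e)) := h4α
      exact Nat.lt_of_mul_lt_mul_left hlt
  · -- backward membership
    intro e he
    simp only [Finset.mem_coe, mem_filter, Nat.mem_divisors] at he ⊢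
    obtain ⟨⟨hedvd, _⟩, h1, h2⟩ := he
    have he0 : 0 < e := Nat.pos_of_dvd_of_pos hedvd hpos
    have hspec := gam_spec M e he0
    have hγα : gam M e ≤ α := by
      by_contra hcon
      have hmin := gam_min M e he0 (show α < gam M e by omega)
      apply hmin
      have h4α : 2*4^α*(e*e) = 2^α*(2^(α+1)*(e*e)) := by
        rw [show (4:ℕ) = 2*2 from rfl, mul_pow, pow_succ]; ring
      rw [h4α, hMdef]
      exact mul_lt_mul_of_pos_left h2 (by positivity)
    refine ⟨⟨mul_dvd_mul (pow_dvd_pow 2 hγα) hedvd, by omega⟩, ?_, ?_⟩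
    · rw [pow4]
      have hassoc : 2*4^(gam M e)*(e*e) = 2*(4^(gam M e)*(e*e)) := by ring
      omega
    · rw [pow4]
      rcases Nat.eq_zero_or_pos (gam M e) with h0 | h0
      · rw [h0]; simpa using h1.le
      · have hmin := gam_min M e he0 (show gam M e - 1 < gam M e by omega)
        have h44 : (4:ℕ)^(gam M e) = 4*4^(gam M e - 1) := by
          rw [← pow_succ']; congr 1; omega
        rw [h44]
        have e1 : 2*4^(gam M e - 1)*(e*e) = 2*(4^(gam M e - 1)*(e*e)) := by ring
        have e2 : 4*4^(gam M e - 1)*(e*e) = 4*(4^(gam M e - 1)*(e*e)) := by ring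
        omega
  · -- left inverse
    intro a ha
    simp only [Finset.mem_coe, mem_filter, Nat.mem_divisors] at ha
    obtain ⟨⟨hadvd, _⟩, h1, h2⟩ := ha
    have ha0 : 0 < a := Nat.pos_of_dvd_of_pos hadvd hM
    set β := a.factorization 2 with hβ
    set e := a / 2^β with he
    have hae : 2^β * e = a := Nat.ordProj_mul_ordCompl_eq_self a 2
    have he0 : 0 < e := Nat.ordCompl_pos 2 (by omega)
    have haa : a*a = 4^β*(e*e) := by rw [← hae, pow4]
    have hfind : gam M e = β := by
      refine gam_eq M e he0 ?_ ?_
      · have : 2*4^β*(e*e) = 2*(4^β*(e*e)) := by ring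
        omega
      · rcases Nat.eq_zero_or_pos β with h0 | h0
        · exact Or.inl h0
        · refine Or.inr ?_
          have h44 : (4:ℕ)^β = 4*4^(β - 1) := by rw [← pow_succ']; congr 1; omega
          have e1 : 2*4^(β-1)*(e*e) = 2*(4^(β-1)*(e*e)) := by ring
          have e2 : 4*(4^(β-1)*(e*e)) = 4^β*(e*e) := by rw [h44]; ring
          omega
    dsimp only
    rw [hfind, hae]
  · -- right inverse
    intro e he
    simp only [Finset.mem_coe, mem_filter, Nat.mem_divisors] at he
    obtain ⟨⟨hedvd, _⟩, h1, h2⟩ := he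
    have he0 : 0 < e := Nat.pos_of_dvd_of_pos hedvd hpos
    have heodd : ¬ 2 ∣ e := fun h => hodd (h.trans hedvd)
    dsimp only
    have hfact : (2^(gam M e)*e).factorization 2 = gam M e := by
      rw [Nat.factorization_mul (by positivity) (by omega)]
      simp only [Finsupp.coe_add, Pi.add_apply]
      rw [Nat.Prime.factorization_pow Nat.prime_two]
      rw [Nat.factorization_eq_zero_of_not_dvd heodd]
      simp
    rw [hfact]
    exact Nat.mul_div_cancel_left e (by positivity)

lemma signed_eq_card (α m₀ : ℕ) (hodd : ¬ 2 ∣ m₀) (hpos : 0 < m₀) :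
    (∑ e ∈ m₀.divisors, (if e*e < 2*(2^α*m₀) then (1:ℝ) else -1))
      = (((2^α*m₀).divisors.filter
          (fun a => 2^α*m₀ < 2*(a*a) ∧ a*a ≤ 2*(2^α*m₀))).card : ℝ) := by
  set M := 2^α*m₀ with hMdef
  have hM : 0 < M := by positivity
  have hQP : ∀ e ∈ m₀.divisors, 2^(α+1)*(e*e) ≤ m₀ → e*e < 2*M := by
    intro e he h
    have h1 : e*e ≤ 2^(α+1)*(e*e) := Nat.le_mul_of_pos_left (e*e) (by positivity)
    have h2 : m₀ ≤ M := Nat.le_mul_of_pos_left m₀ (by positivity)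
    omega
  have hsplit : m₀.divisors.filter (fun e => e*e < 2*M)
      = (m₀.divisors.filter (fun e => 2^(α+1)*(e*e) ≤ m₀))
        ∪ (m₀.divisors.filter (fun e => e*e < 2*M ∧ m₀ < 2^(α+1)*(e*e))) := by
    ext e
    simp only [mem_union, mem_filter]
    constructor
    · rintro ⟨h1, h2⟩
      rcases le_or_gt (2^(α+1)*(e*e)) m₀ with h | h
      · exact Or.inl ⟨h1, h⟩
      · exact Or.inr ⟨h1, h2, h⟩
    · rintro (⟨h1, h2⟩ | ⟨h1, h2, _⟩)
      · exact ⟨h1, hQP e (by simpa using h1) h2⟩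
      · exact ⟨h1, h2⟩
  have hdisj : Disjoint (m₀.divisors.filter (fun e => 2^(α+1)*(e*e) ≤ m₀))
      (m₀.divisors.filter (fun e => e*e < 2*M ∧ m₀ < 2^(α+1)*(e*e))) := by
    rw [Finset.disjoint_left]
    intro e h1 h2
    simp only [mem_filter] at h1 h2
    omega
  have hneg : m₀.divisors.filter (fun e => ¬ (e*e < 2*M))
      = m₀.divisors.filter (fun e => 2^(α+1)*m₀ < e*e) := by
    apply Finset.filter_congr
    intro e he
    simp only [Nat.mem_divisors] at he
    have heodd : ¬ 2 ∣ e := fun h => hodd (h.trans he.1)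
    have hne : e*e ≠ 2*M := by
      intro hcon
      rcases (Nat.Prime.dvd_mul Nat.prime_two).mp (⟨M, hcon⟩ : 2 ∣ e*e) with h' | h' <;>
        exact heodd h'
    have h2M : 2*M = 2^(α+1)*m₀ := by rw [hMdef, pow_succ]; ring
    simp only [not_lt]
    omega
  rw [Finset.sum_ite, Finset.sum_const, Finset.sum_const, nsmul_eq_mul, nsmul_eq_mul,
    mul_one]
  rw [hneg, flip_card m₀ (2^(α+1)) hpos hodd ⟨2^α, by rw [pow_succ]; ring⟩]
  rw [hsplit, Finset.card_union_of_disjoint hdisj]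
  rw [cardS_eq α m₀ hodd hpos]
  push_cast
  ring

lemma starId (M : ℕ) :
    (∑ n ∈ Icc 1 M, if n*(n+1)/2 ≤ M ∧ n ∣ (M - n*(n+1)/2) then (-1:ℝ)^(n+1) else 0)
      = ∑ j ∈ Icc 1 M, ∑ k ∈ range (j+1), (if j*(j+k) = M then (strWt j k : ℝ) else 0) := by
  rcases Nat.eq_zero_or_pos M with rfl | hM
  · simp
  have hMne : M ≠ 0 := by omega
  set α := M.factorization 2 with hα
  set m₀ := M / 2^α with hm₀
  have hm : 2^α * m₀ = M := Nat.ordProj_mul_ordCompl_eq_self M 2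
  have hodd : ¬ 2 ∣ m₀ := Nat.not_dvd_ordCompl Nat.prime_two hMne
  have hpos : 0 < m₀ := Nat.ordCompl_pos 2 hMne
  rw [hsum_eq M α m₀ hM hm.symm hodd]
  have hcast : (∑ j ∈ Icc 1 M, ∑ k ∈ range (j+1),
      (if j*(j+k) = M then (strWt j k : ℝ) else 0))
      = ((∑ j ∈ Icc 1 M, ∑ k ∈ range (j+1),
          (if j*(j+k) = M then strWt j k else 0) : ℕ) : ℝ) := by
    push_cast [apply_ite (Nat.cast : ℕ → ℝ)]
    rfl
  rw [hcast, rhs_eq_card M hM]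
  rw [show (2:ℕ)*M = 2*(2^α*m₀) from by rw [hm]] 
  rw [show M = 2^α*m₀ from hm.symm]
  exact signed_eq_card α m₀ hodd hpos

lemma starId' (M R : ℕ) (hMR : M ≤ R) :
    (∑ n ∈ Icc 1 M, if n*(n+1)/2 ≤ M ∧ n ∣ (M - n*(n+1)/2) then (-1:ℝ)^(n+1) else 0)
      = ∑ j ∈ Icc 1 R, ∑ k ∈ range (j+1), (if j*(j+k) = M then (strWt j k : ℝ) else 0) := by
  rw [starId M]
  apply Finset.sum_subset
  · intro j hj
    simp only [mem_Icc] at hj ⊢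
    omega
  · intro j hj hj'
    simp only [mem_Icc] at hj hj'
    apply Finset.sum_eq_zero
    intro k _
    rw [if_neg]
    intro hcon
    have : j ≤ j*(j+k) := Nat.le_mul_of_pos_right _ (by omega)
    omega



lemma nodup_le_iff {s t : Multiset ℕ} (h : s.Nodup) : s ≤ t ↔ ∀ x ∈ s, x ∈ t := by
  classical
  constructor
  · exact fun hle x hx => Multiset.mem_of_le hle hx
  · intro hmem
    rw [Multiset.le_iff_count]
    intro x
    by_cases hx : x ∈ s
    · rw [Multiset.count_eq_one_of_mem h hx]
      exact Multiset.count_pos.mpr (hmem x hx)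
    · rw [Multiset.count_eq_zero_of_notMem hx]
      omega

open scoped Classical in
lemma card_partitions_with (N : ℕ) (s : Multiset ℕ) (hpos : ∀ x ∈ s, 0 < x) :
    ((Finset.univ : Finset (Nat.Partition N)).filter (fun P => s ≤ P.parts)).card
      = if s.sum ≤ N then Fintype.card (Nat.Partition (N - s.sum)) else 0 := by
  split_ifs with hle
  · rw [← Fintype.card_subtype]
    apply Fintype.card_congr
    refine ⟨fun P => ⟨P.1.parts - s, ?_, ?_⟩, fun Q => ⟨⟨Q.parts + s, ?_, ?_⟩, ?_⟩, ?_, ?_⟩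
    · intro i hi
      exact P.1.parts_pos (Multiset.mem_of_le (Multiset.sub_le_self _ _) hi)
    · have hadd : P.1.parts - s + s = P.1.parts := tsub_add_cancel_of_le P.2
      have hsum := P.1.parts_sum
      rw [← hadd, Multiset.sum_add] at hsum
      omega
    · intro i hi
      rcases Multiset.mem_add.mp hi with h | h
      · exact Q.parts_pos h
      · exact hpos i h
    · rw [Multiset.sum_add, Q.parts_sum]
      omega
    · exact le_add_self
    · intro P
      apply Subtype.ext
      apply Nat.Partition.ext
      simp only
      exact tsub_add_cancel_of_le P.2
    · intro Q
      apply Nat.Partition.ext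
      simp only
      exact (add_tsub_cancel_right (α := Multiset ℕ) _ s)
  · rw [Finset.card_eq_zero, Finset.filter_eq_empty_iff]
    intro P _
    intro hcon
    apply hle
    obtain ⟨u, hu⟩ := Multiset.le_iff_exists_add.mp hcon
    have hsum := P.parts_sum
    rw [hu, Multiset.sum_add] at hsum
    omega

lemma str_sum (m j k : ℕ) (hj : 1 ≤ j) :
    (∑ i ∈ Icc 1 j, m * (2 * i - 1 + k)) = m * (j * j + j * k) := by
  induction j with
  | zero => omega
  | succ j ih =>
    rcases Nat.eq_zero_or_pos j with rfl | hj0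
    · simp
    · rw [Finset.sum_Icc_succ_top (by omega), ih hj0]
      have h1 : 2 * (j + 1) - 1 + k = 2 * j + 1 + k := by omega
      rw [h1]
      ring

lemma Cstr_eq (m N : ℕ) (hm : 1 ≤ m) :
    Cstr m N = ∑ j ∈ Icc 1 N, ∑ k ∈ range (j + 1),
      (if m * (j*j + j*k) ≤ N then Fintype.card (Nat.Partition (N - m * (j*j + j*k))) else 0)
        * strWt j k := by
  classical
  rw [Cstr, Finset.sum_comm]
  refine Finset.sum_congr rfl fun j hj => ?_
  rw [Finset.sum_comm]
  refine Finset.sum_congr rfl fun k hk => ?_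
  simp only [mem_Icc] at hj
  set f : ℕ → ℕ := fun i => m * (2 * i - 1 + k) with hf
  set s : Multiset ℕ := (Icc 1 j).val.map f with hs
  have hnodup : s.Nodup := by
    refine Multiset.Nodup.map_on ?_ (Icc 1 j).nodup
    intro x hx y hy hxy
    rw [Finset.mem_val, Finset.mem_Icc] at hx hy
    have := Nat.eq_of_mul_eq_mul_left (show 0 < m by omega) hxy
    omega
  have hpos : ∀ x ∈ s, 0 < x := by
    intro x hx
    obtain ⟨i, hi, rfl⟩ := Multiset.mem_map.mp hx
    rw [Finset.mem_val, Finset.mem_Icc] at hi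
    have : 1 ≤ 2*i - 1 + k := by omega
    exact Nat.mul_pos (by omega) (by omega)
  have hcond : ∀ P : Nat.Partition N,
      (∀ i ∈ Finset.Icc 1 j, m * (2 * i - 1 + k) ∈ P.parts) ↔ s ≤ P.parts := by
    intro P
    rw [nodup_le_iff hnodup]
    constructor
    · intro hH x hx
      obtain ⟨i, hi, rfl⟩ := Multiset.mem_map.mp hx
      exact hH i (Finset.mem_def.mpr hi)
    · intro hH i hi
      exact hH _ (Multiset.mem_map_of_mem f (Finset.mem_def.mp hi))
  have hsum : s.sum = m * (j*j + j*k) := by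
    rw [hs]
    have : (Multiset.map f (Icc 1 j).val).sum = ∑ i ∈ Icc 1 j, f i := rfl
    rw [this, hf]
    exact str_sum m j k hj.1
  calc (∑ P : Nat.Partition N,
        if ∀ i ∈ Finset.Icc 1 j, m * (2 * i - 1 + k) ∈ P.parts then strWt j k else 0)
      = ∑ P : Nat.Partition N, (if s ≤ P.parts then strWt j k else 0) := by
        refine Finset.sum_congr rfl fun P _ => ?_
        rw [if_congr (hcond P) rfl rfl]
    _ = ((Finset.univ : Finset (Nat.Partition N)).filter (fun P => s ≤ P.parts)).card
          * strWt j k := by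
        rw [Finset.sum_ite, Finset.sum_const, Finset.sum_const, smul_eq_mul, smul_eq_mul]
        omega
    _ = (if m * (j*j + j*k) ≤ N
          then Fintype.card (Nat.Partition (N - m * (j*j + j*k))) else 0) * strWt j k := by
        rw [card_partitions_with N s hpos, hsum]

/-- Kim–Kim–Seo combinatorial interpretation:
the coefficient of `q^N` in `(1/(q;q)_∞) h(q^m)` is `C_m(N)`. -/
theorem kim_kim_seo_interpretation (m : ℕ) (hm : 1 ≤ m) (N : ℕ) :
    PowerSeries.coeff (R := ℝ) N (euler⁻¹ * substPow m h) = (Cstr m N : ℝ) := by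
  classical
  have hm0 : 0 < m := hm
  set p : ℕ → ℝ := fun a => (Fintype.card (Nat.Partition a) : ℝ) with hp
  set H : ℕ → ℝ := fun M => ∑ n ∈ Icc 1 M,
    if n*(n+1)/2 ≤ M ∧ n ∣ (M - n*(n+1)/2) then (-1:ℝ)^(n+1) else 0 with hH
  have hH0 : H 0 = 0 := by simp [hH]
  -- Step 1: coefficient as a sum over the antidiagonal
  have step1 : PowerSeries.coeff (R := ℝ) N (euler⁻¹ * substPow m h)
      = ∑ x ∈ Finset.HasAntidiagonal.antidiagonal N,
          p x.1 * (if m ∣ x.2 then H (x.2/m) else 0) := by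
    rw [PowerSeries.coeff_mul]
    refine Finset.sum_congr rfl fun x hx => ?_
    rw [Finset.HasAntidiagonal.mem_antidiagonal] at hx
    rw [coeff_inv_euler N x.1 (by omega)]
    rw [substPow, PowerSeries.coeff_mk, h, PowerSeries.coeff_mk]
  rw [step1]
  -- Step 2: reindex over the second coordinate
  have step2 : (∑ x ∈ Finset.HasAntidiagonal.antidiagonal N, p x.1 * (if m ∣ x.2 then H (x.2/m) else 0))
      = ∑ b ∈ range (N+1), p (N-b) * (if m ∣ b then H (b/m) else 0) := by
    rw [Finset.Nat.sum_antidiagonal_eq_sum_range_succ_mk]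
    refine Finset.sum_nbij' (fun a => N - a) (fun b => N - b) ?_ ?_ ?_ ?_ ?_ <;>
      (intro x hx; simp only [mem_range] at hx ⊢) <;> try omega
    have h1 : N - (N - x) = x := by omega
    rw [h1]
  rw [step2]
  -- Step 3: only multiples of m contribute
  have step3 : (∑ b ∈ range (N+1), p (N-b) * (if m ∣ b then H (b/m) else 0))
      = ∑ M ∈ range (N+1), (if m*M ≤ N then p (N - m*M) else 0) * H M := by
    have hl : ∀ b, p (N-b) * (if m ∣ b then H (b/m) else 0)
        = if m ∣ b then p (N-b) * H (b/m) else 0 := by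
      intro b; split_ifs <;> simp
    have hr : ∀ M, (if m*M ≤ N then p (N - m*M) else 0) * H M
        = if m*M ≤ N then p (N - m*M) * H M else 0 := by
      intro M; split_ifs <;> simp
    simp only [hl, hr]
    rw [← Finset.sum_filter, ← Finset.sum_filter]
    refine Finset.sum_nbij' (fun b => b/m) (fun M => m*M) ?_ ?_ ?_ ?_ ?_
    · intro b hb
      simp only [mem_filter, mem_range] at hb ⊢
      obtain ⟨hb1, hb2⟩ := hb
      have := Nat.div_le_self b m
      have := Nat.mul_div_cancel' hb2
      constructor <;> omega
    · intro M hM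
      simp only [mem_filter, mem_range] at hM ⊢
      exact ⟨by omega, Dvd.intro M rfl⟩
    · intro b hb
      simp only [mem_filter, mem_range] at hb
      exact Nat.mul_div_cancel' hb.2
    · intro M hM
      exact Nat.mul_div_cancel_left M hm0
    · intro b hb
      simp only [mem_filter, mem_range] at hb
      rw [Nat.mul_div_cancel' hb.2]
  rw [step3]
  -- Step 4: drop the M = 0 term
  have step4 : (∑ M ∈ range (N+1), (if m*M ≤ N then p (N - m*M) else 0) * H M)
      = ∑ M ∈ Icc 1 N, (if m*M ≤ N then p (N - m*M) else 0) * H M := by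
    have hins : range (N+1) = insert 0 (Icc 1 N) := by
      ext x
      simp only [mem_range, mem_insert, mem_Icc]
      omega
    rw [hins, Finset.sum_insert (by simp)]
    rw [hH0, mul_zero, zero_add]
  rw [step4]
  -- Step 5: apply the core identity and push everything through
  have step5 : (∑ M ∈ Icc 1 N, (if m*M ≤ N then p (N - m*M) else 0) * H M)
      = ∑ j ∈ Icc 1 N, ∑ k ∈ range (j + 1),
          (if m * (j*j + j*k) ≤ N then p (N - m * (j*j + j*k)) else 0) * (strWt j k : ℝ) := by
    have hMrw : ∀ M ∈ Icc 1 N, (if m*M ≤ N then p (N - m*M) else 0) * H M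
        = ∑ j ∈ Icc 1 N, ∑ k ∈ range (j+1),
            (if j*(j+k) = M then (if m*M ≤ N then p (N - m*M) else 0) * (strWt j k : ℝ) else 0) := by
      intro M hM
      simp only [mem_Icc] at hM
      simp only [hH]
      rw [starId' M N hM.2, Finset.mul_sum]
      refine Finset.sum_congr rfl fun j _ => ?_
      rw [Finset.mul_sum]
      refine Finset.sum_congr rfl fun k _ => ?_
      split_ifs <;> simp
    rw [Finset.sum_congr rfl hMrw, Finset.sum_comm]
    refine Finset.sum_congr rfl fun j hj => ?_
    rw [Finset.sum_comm]
    refine Finset.sum_congr rfl fun k _ => ?_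
    rw [Finset.sum_ite_eq (Icc 1 N) (j*(j+k))
      (fun M => (if m*M ≤ N then p (N - m*M) else 0) * (strWt j k : ℝ))]
    simp only [mem_Icc] at hj
    have hjj : j*j + j*k = j*(j+k) := by ring
    rw [hjj]
    by_cases hmem : j*(j+k) ∈ Icc 1 N
    · rw [if_pos hmem]
    · rw [if_neg hmem]
      simp only [mem_Icc] at hmem
      have h1 : 1 ≤ j*(j+k) := Nat.one_le_iff_ne_zero.mpr (Nat.mul_ne_zero (by omega) (by omega))
      have h2 : j*(j+k) ≤ m*(j*(j+k)) := Nat.le_mul_of_pos_left _ hm0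
      rw [if_neg (by omega)]
      ring
  rw [step5]
  -- Step 6: identify with Cstr
  rw [Cstr_eq m N hm]
  push_cast [apply_ite (Nat.cast : ℕ → ℝ)]
  rfl
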